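/- Let T be a semi-infinite tetradiagonal lower Hessenberg matrix with entries c_n on the diagonal, b_n on the first subdiagonal, a_n on the second subdiagonal, and 1 on the superdiagonal. If T = L₁L₂U where L₁, L₂ are lower bidiagonal unitriangular matrices with subdiagonal entries α_{3n+2} (for L₁) and α_{3n+3} (for L₂), and U is upper bidiagonal with diagonal entries α_{3n+1} and superdiagonal 1, then c_n = α_{3n+1} + α_{3n} + α_{3n-1}, b_n = α_{3n}α_{3n-2} + α_{3n-1}α_{3n-2} + α_{3n-1}α_{3n-3}, and a_n = α_{3n-1}α_{3n-3}α_{3n-5}, where α_k = 0 for k ≤ 0. -/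

import Mathlib

/-- Entrywise product of semi-infinite (banded) matrices; the truncation range
`i + j + 2` covers all nonzero terms for the banded matrices considered here. -/
def matMul (A B : ℕ → ℕ → ℝ) : ℕ → ℕ → ℝ :=
  fun i j => ∑ k ∈ Finset.range (i + j + 2), A i k * B k j

/-- Lower bidiagonal unitriangular matrix `L₁` with entry `α (3n+2)` at `(n+1, n)`. -/
def L1mat (α : ℤ → ℝ) : ℕ → ℕ → ℝ :=
  fun i j => if i = j then 1 else if i = j + 1 then α (3 * (j : ℤ) + 2) else 0

/-- Lower bidiagonal unitriangular matrix `L₂` with entry `α (3n+3)` at `(n+1, n)`. -/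
def L2mat (α : ℤ → ℝ) : ℕ → ℕ → ℝ :=
  fun i j => if i = j then 1 else if i = j + 1 then α (3 * (j : ℤ) + 3) else 0

/-- Upper bidiagonal matrix `U` with diagonal entries `α (3n+1)` and superdiagonal 1. -/
def Umat (α : ℤ → ℝ) : ℕ → ℕ → ℝ :=
  fun i j => if i = j then α (3 * (j : ℤ) + 1) else if j = i + 1 then 1 else 0

private lemma sum_one (N : ℕ) (f : ℕ → ℝ) (p : ℕ) (hp : p < N)
    (h : ∀ k, k ≠ p → f k = 0) : ∑ k ∈ Finset.range N, f k = f p :=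
  Finset.sum_eq_single_of_mem p (Finset.mem_range.mpr hp) (fun k _ hk => h k hk)

private lemma sum_two (N : ℕ) (f : ℕ → ℝ) (p q : ℕ) (hpq : p < q) (hq : q < N)
    (h : ∀ k, k ≠ p → k ≠ q → f k = 0) :
    ∑ k ∈ Finset.range N, f k = f p + f q := by
  rw [← Finset.sum_subset (s₁ := {p, q})
      (Finset.insert_subset_iff.mpr ⟨Finset.mem_range.mpr (hpq.trans hq),
        Finset.singleton_subset_iff.mpr (Finset.mem_range.mpr hq)⟩)
      (fun k _ hk => by
        simp only [Finset.mem_insert, Finset.mem_singleton, not_or] at hk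
        exact h k hk.1 hk.2)]
  rw [Finset.sum_insert (by simp [hpq.ne]), Finset.sum_singleton]

private lemma M_zero (α : ℤ → ℝ) (j : ℕ) :
    matMul (L1mat α) (L2mat α) 0 j = L2mat α 0 j := by
  unfold matMul
  rw [sum_one _ _ 0 (by omega)]
  · simp [L1mat]
  · intro k hk
    simp [L1mat, hk, Ne.symm hk]

private lemma M_succ (α : ℤ → ℝ) (i j : ℕ) :
    matMul (L1mat α) (L2mat α) (i + 1) j =
      α (3 * (i : ℤ) + 2) * L2mat α i j + L2mat α (i + 1) j := by
  unfold matMul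
  rw [sum_two _ _ i (i + 1) (by omega) (by omega)]
  · simp [L1mat]
  · intro k hk hk'
    have h1 : i + 1 ≠ k := Ne.symm hk'
    have h2 : i + 1 ≠ k + 1 := by omega
    simp [L1mat, h1, h2, Ne.symm hk]

private lemma MU_zero (M : ℕ → ℕ → ℝ) (α : ℤ → ℝ) (i : ℕ) :
    matMul M (Umat α) i 0 = M i 0 * α 1 := by
  unfold matMul
  rw [sum_one _ _ 0 (by omega)]
  · simp [Umat]
  · intro k hk
    simp [Umat, Ne.symm hk, hk]

private lemma MU_succ (M : ℕ → ℕ → ℝ) (α : ℤ → ℝ) (i j : ℕ) :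
    matMul M (Umat α) i (j + 1) = M i j + M i (j + 1) * α (3 * (j : ℤ) + 4) := by
  unfold matMul
  rw [sum_two _ _ j (j + 1) (by omega) (by omega)]
  · have : j ≠ j + 1 := by omega
    simp [Umat, this]
    ring_nf
    norm_num
  · intro k hk hk'
    have h1 : k ≠ j + 1 := hk'
    have h2 : j + 1 ≠ k + 1 := by omega
    simp [Umat, h1, h2, Ne.symm hk]

theorem stmt0 (α : ℤ → ℝ) (hα0 : ∀ k : ℤ, k ≤ 0 → α k = 0)
    (a b c : ℕ → ℝ) (T : ℕ → ℕ → ℝ)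
    (hT : ∀ i j : ℕ, T i j =
      if i = j then c i else if i = j + 1 then b i else if i = j + 2 then a i
      else if j = i + 1 then 1 else 0)
    (hfac : ∀ i j : ℕ, T i j = matMul (matMul (L1mat α) (L2mat α)) (Umat α) i j) :
    (∀ n : ℕ, c n = α (3 * (n : ℤ) + 1) + α (3 * (n : ℤ)) + α (3 * (n : ℤ) - 1)) ∧
    (∀ n : ℕ, 1 ≤ n → b n =
      α (3 * (n : ℤ)) * α (3 * (n : ℤ) - 2) + α (3 * (n : ℤ) - 1) * α (3 * (n : ℤ) - 2) +
        α (3 * (n : ℤ) - 1) * α (3 * (n : ℤ) - 3)) ∧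
    (∀ n : ℕ, 2 ≤ n → a n =
      α (3 * (n : ℤ) - 1) * α (3 * (n : ℤ) - 3) * α (3 * (n : ℤ) - 5)) := by
  refine ⟨?_, ?_, ?_⟩
  · intro n
    have h := (hT n n).symm.trans (hfac n n)
    simp only [if_pos rfl, if_true] at h
    rw [h]
    cases n with
    | zero =>
      rw [MU_zero, M_zero]
      simp [L2mat, hα0 0 le_rfl, hα0 (-1) (by norm_num)]
    | succ m =>
      rw [MU_succ, M_succ, M_succ]
      have h1 : m ≠ m + 1 := by omega
      have h2 : m + 1 ≠ m := by omega
      have h3 : m + 1 ≠ m + 1 + 1 := by omega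
      have h4 : m ≠ m + 1 + 1 := by omega
      have h5 : m ≠ m + 1 + 1 + 1 := by omega
      simp only [L2mat, if_pos rfl, if_neg h1, if_neg h2, if_neg h3, if_neg h4, if_neg h5]
      push_cast
      ring_nf
  · intro n hn
    obtain ⟨m, rfl⟩ : ∃ m, n = m + 1 := ⟨n - 1, by omega⟩
    have h := (hT (m + 1) m).symm.trans (hfac (m + 1) m)
    have e1 : m + 1 ≠ m := by omega
    simp only [if_neg e1, if_pos rfl, if_true] at h
    rw [h]
    cases m with
    | zero =>
      rw [MU_zero, M_succ]
      norm_num [L2mat]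
      rw [hα0 0 le_rfl]
      ring
    | succ p =>
      rw [MU_succ, M_succ, M_succ]
      simp only [L2mat]
      norm_num
      rw [show (3:ℤ)*((p:ℤ)+1+1) - 3 = 3 + (p:ℤ)*3 by ring,
        show (3:ℤ)*((p:ℤ)+1+1) - 1 = 5 + (p:ℤ)*3 by ring,
        show (3:ℤ)*((p:ℤ)+1+1) - 2 = 4 + (p:ℤ)*3 by ring,
        show (3:ℤ)*((p:ℤ)+1+1) = 6 + (p:ℤ)*3 by ring]
      ring_nf
      rw [if_neg (show 2 + p ≠ p by omega)]
      ring
  · intro n hn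
    obtain ⟨p, rfl⟩ : ∃ p, n = p + 2 := ⟨n - 2, by omega⟩
    have h := (hT (p + 2) p).symm.trans (hfac (p + 2) p)
    have e1 : p + 2 ≠ p := by omega
    have e2 : p + 2 ≠ p + 1 := by omega
    simp only [if_neg e1, if_neg e2, if_pos rfl, if_true] at h
    rw [h]
    cases p with
    | zero =>
      rw [MU_zero, M_succ]
      norm_num [L2mat]
    | succ q =>
      rw [MU_succ, M_succ, M_succ]
      simp only [L2mat]
      norm_num
      rw [show (3:ℤ)*((q:ℤ)+1+2) - 5 = 4 + (q:ℤ)*3 by ring,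
        show (3:ℤ)*((q:ℤ)+1+2) - 3 = 6 + (q:ℤ)*3 by ring,
        show (3:ℤ)*((q:ℤ)+1+2) - 1 = 8 + (q:ℤ)*3 by ring]
      ring_nf
      rw [if_neg (show 3 + q ≠ q by omega)]
      ring
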